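/- Let T be a clan with the finite-limit clan structure, i.e. every morphism of T is a display map (so T is a small finite-limit category). Then every full map in T-Mod is an isomorphism. -/

import Mathlib

open CategoryTheory CategoryTheory.Limits Opposite

universe u

namespace ClanThy

variable {T : Type u} [SmallCategory T]

/-- The clan axioms for a class `disp` of "display maps" in a small category `T`
(which is assumed to have a terminal object): pullbacks of display maps along arbitrary
maps exist and are display maps; isomorphisms and composites of display maps are display
maps; terminal projections are display maps. -/
structure IsClan [HasTerminal T] (disp : MorphismProperty T) : Prop where
  pullback_exists :
    ∀ {Γ' Γ Δ : T} (p : Γ' ⟶ Γ) (s : Δ ⟶ Γ), disp p →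
      ∃ (Δ' : T) (q : Δ' ⟶ Δ) (s' : Δ' ⟶ Γ') (h : q ≫ s = s' ≫ p),
        disp q ∧ Nonempty (IsLimit (PullbackCone.mk q s' h))
  iso_mem : ∀ {X Y : T} (e : X ⟶ Y), IsIso e → disp e
  comp_mem : ∀ {X Y Z : T} (p : X ⟶ Y) (q : Y ⟶ Z), disp p → disp q → disp (p ≫ q)
  terminal_mem : ∀ X : T, disp (terminal.from X)

/-- A model of the clan: a functor `T ⥤ Type` preserving the terminal object and
pullbacks of display maps. -/
def IsModel (disp : MorphismProperty T) (A : T ⥤ Type u) : Prop :=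
  Nonempty (PreservesLimitsOfShape (Discrete PEmpty.{1}) A) ∧
    ∀ ⦃X Y Z : T⦄ (g : X ⟶ Z) (p : Y ⟶ Z), disp p →
      Nonempty (PreservesLimit (cospan g p) A)

end ClanThy

open ClanThy

/-- The natural transformation `Hom(Γ,-) ⟶ A` corresponding to an element of `A.obj Γ`. -/
def eltNat {T : Type u} [SmallCategory T] (A : T ⥤ Type u) {Γ : T} (a : A.obj Γ) :
    coyoneda.obj (op Γ) ⟶ A where
  app X := TypeCat.ofHom fun g => A.map g a
  naturality X Y h := by
    ext g
    simp [FunctorToTypes.map_comp_apply]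

/-- if `T` carries the finite-limit clan structure (every morphism is a
display map, so `T` is a small finite-limit category), then every full map of models is
an isomorphism. -/
theorem full_is_iso_of_finiteLimit_clan
    {T : Type u} [SmallCategory T] [HasTerminal T]
    (hclan : IsClan (⊤ : MorphismProperty T))
    {A B : T ⥤ Type u} (hA : IsModel (⊤ : MorphismProperty T) A)
    (hB : IsModel (⊤ : MorphismProperty T) B) (f : A ⟶ B)
    (hfull : ∀ {Δ Γ : T} (p : Δ ⟶ Γ), HasLiftingProperty (coyoneda.map p.op) f) :
    IsIso f := by
  obtain ⟨⟨hAterm⟩, hApb⟩ := hA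
  obtain ⟨⟨hBterm⟩, hBpb⟩ := hB
  -- `A.obj ⊤` and `B.obj ⊤` are singletons
  have eA : A.obj (⊤_ T) ≃ PUnit := by
    haveI := hAterm
    exact ((PreservesTerminal.iso A).trans Types.terminalIso).toEquiv
  have eB : B.obj (⊤_ T) ≃ PUnit := by
    haveI := hBterm
    exact ((PreservesTerminal.iso B).trans Types.terminalIso).toEquiv
  haveI hAsub : Subsingleton (A.obj (⊤_ T)) := eA.subsingleton
  haveI hBsub : Subsingleton (B.obj (⊤_ T)) := eB.subsingleton
  have hAne : Nonempty (A.obj (⊤_ T)) := ⟨eA.symm PUnit.unit⟩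
  suffices h : ∀ Γ : T, IsIso (f.app Γ) from NatIso.isIso_of_isIso_app f
  intro Γ
  rw [CategoryTheory.isIso_iff_bijective]
  constructor
  · -- injectivity, via lifting against the diagonal
    intro a a' hff
    -- the product Γ × Γ as a pullback over the terminal object
    obtain ⟨P, q, s', hcomm, -, ⟨hlim⟩⟩ :=
      hclan.pullback_exists (terminal.from Γ) (terminal.from Γ) trivial
    -- the diagonal
    obtain ⟨δ, hδ1, hδ2⟩ := PullbackCone.IsLimit.lift' hlim (𝟙 Γ) (𝟙 Γ) rfl
    simp only [PullbackCone.mk_pt, PullbackCone.mk_fst, PullbackCone.mk_snd] at hδ1 hδ2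
    change Γ ⟶ P at δ
    -- mapped pullback cones are limits
    haveI := (hApb (terminal.from Γ) (terminal.from Γ) trivial).some
    haveI := (hBpb (terminal.from Γ) (terminal.from Γ) trivial).some
    have hAlim := isLimitPullbackConeMapOfIsLimit A hcomm hlim
    have hBlim := isLimitPullbackConeMapOfIsLimit B hcomm hlim
    -- pair ⟨a, a'⟩ in A.obj P
    obtain ⟨la, hla1, hla2⟩ := PullbackCone.IsLimit.lift' hAlim
      (TypeCat.ofHom fun _ : PUnit.{u+1} => a) (TypeCat.ofHom fun _ => a')
      (by ext x; exact Subsingleton.elim _ _)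
    set c : A.obj P := la PUnit.unit with hc
    have hqc : A.map q c = a := types_congr_hom hla1 PUnit.unit
    have hsc : A.map s' c = a' := types_congr_hom hla2 PUnit.unit
    -- f c = B.map δ (f a), since both have the same projections
    have hfc : f.app P c = B.map δ (f.app Γ a) := by
      have h1 : B.map q (f.app P c) = B.map q (B.map δ (f.app Γ a)) := by
        erw [← FunctorToTypes.map_comp_apply, hδ1, FunctorToTypes.map_id_apply,
          ← FunctorToTypes.naturality, hqc]
      have h2 : B.map s' (f.app P c) = B.map s' (B.map δ (f.app Γ a)) := by
        erw [← FunctorToTypes.map_comp_apply, hδ2, FunctorToTypes.map_id_apply,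
          ← FunctorToTypes.naturality, hsc, hff]
      have := PullbackCone.IsLimit.hom_ext hBlim
        (k := TypeCat.ofHom fun _ : PUnit.{u+1} => f.app P c)
        (l := TypeCat.ofHom fun _ => B.map δ (f.app Γ a))
        (by ext x; exact h1) (by ext x; exact h2)
      exact types_congr_hom this PUnit.unit
    -- the lifting square
    haveI := hfull δ
    have sq : CommSq (eltNat A c) (coyoneda.map δ.op) f (eltNat B (f.app Γ a)) := by
      constructor
      ext X g
      show f.app X (A.map g c) = B.map (δ ≫ g) (f.app Γ a)
      rw [FunctorToTypes.naturality, hfc, ← FunctorToTypes.map_comp_apply]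
    have h1 := types_congr_hom (NatTrans.congr_app sq.fac_left Γ) q
    have h2 := types_congr_hom (NatTrans.congr_app sq.fac_left Γ) s'
    simp only [Functor.flip_obj_obj, NatTrans.comp_app, types_comp_apply, Functor.flip_map_app, yoneda_obj_map, TypeCat.ofHom_apply,
      Quiver.Hom.unop_op, eltNat] at h1 h2
    erw [hδ1] at h1
    erw [hδ2] at h2
    rw [← hqc, ← hsc, ← h1, ← h2]
  · -- surjectivity, via lifting against the terminal projection
    intro b
    obtain ⟨a₀⟩ := hAne
    haveI := hfull (terminal.from Γ)
    have sq : CommSq (eltNat A a₀) (coyoneda.map (terminal.from Γ).op) f (eltNat B b) := by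
      constructor
      ext X g
      show f.app X (A.map g a₀) = B.map (terminal.from Γ ≫ g) b
      rw [FunctorToTypes.naturality, FunctorToTypes.map_comp_apply]
      exact congrArg (B.map g) (Subsingleton.elim _ _)
    have h := types_congr_hom (NatTrans.congr_app sq.fac_right Γ) (𝟙 Γ)
    simp only [NatTrans.comp_app, types_comp_apply, eltNat, TypeCat.ofHom_apply,
      FunctorToTypes.map_id_apply] at h
    exact ⟨sq.lift.app Γ (𝟙 Γ), h⟩
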